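/- There exists a unique ℂ-algebra homomorphism ρ : Cl(V ⊕ W) → End_ℂ(F) such that ρ(ι(v_a ⊕ 0)) is the creation operator v_a and ρ(ι(0 ⊕ w_a)) is the annihilation operator w_a for every a ∈ H; in other words, the Fock space F of semi-infinite forms is naturally a module over the infinite-dimensional Clifford algebra Cl(V ⊕ W). -/

import Mathlib

open scoped Classical

/-- The set of half-integers `H = ℤ + 1/2`. -/
def HalfInt : Set ℚ := {q | ∃ n : ℤ, q = (n : ℚ) + 1/2}

/-- The negative half-integers `H⁻`. -/
def Hneg : Set ℚ := {q | q ∈ HalfInt ∧ q < 0}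

/-- The positive half-integers `H⁺`. -/
def Hpos : Set ℚ := {q | q ∈ HalfInt ∧ 0 < q}

/-- A Maya diagram: a set of half-integers whose symmetric difference with `H⁻` is finite. -/
structure Maya where
  carrier : Set ℚ
  subset_halfInt : carrier ⊆ HalfInt
  finite_symmDiff : (symmDiff carrier Hneg).Finite

/-- The Fock space of semi-infinite forms: the free ℂ-vector space on Maya diagrams. -/
abbrev Fock : Type := Maya →₀ ℂ

lemma symmDiff_insert_subset (a : ℚ) (S T : Set ℚ) :
    symmDiff (insert a S) T ⊆ insert a (symmDiff S T) := by
  intro x hx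
  simp only [Set.mem_symmDiff, Set.mem_insert_iff] at *
  tauto

lemma symmDiff_diff_subset (a : ℚ) (S T : Set ℚ) :
    symmDiff (S \ {a}) T ⊆ insert a (symmDiff S T) := by
  intro x hx
  simp only [Set.mem_symmDiff, Set.mem_insert_iff, Set.mem_diff,
    Set.mem_singleton_iff] at *
  tauto

/-- Adding a half-integer to a Maya diagram. -/
def Maya.insertCell (M : Maya) (a : ℚ) (ha : a ∈ HalfInt) : Maya where
  carrier := insert a M.carrier
  subset_halfInt := by
    intro x hx
    rcases hx with rfl | hx
    · exact ha
    · exact M.subset_halfInt hx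
  finite_symmDiff :=
    Set.Finite.subset (M.finite_symmDiff.insert a) (symmDiff_insert_subset a _ _)

/-- Removing a half-integer from a Maya diagram. -/
def Maya.eraseCell (M : Maya) (a : ℚ) : Maya where
  carrier := M.carrier \ {a}
  subset_halfInt := fun _ hx => M.subset_halfInt hx.1
  finite_symmDiff :=
    Set.Finite.subset (M.finite_symmDiff.insert a) (symmDiff_diff_subset a _ _)

/-- The sign `(-1)^{#{x ∈ S : x > a}}`. -/
noncomputable def sgn (S : Set ℚ) (a : ℚ) : ℂ := (-1) ^ (S ∩ Set.Ioi a).ncard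

/-- The creation operator `v_a` (exterior multiplication by `v_a`). -/
noncomputable def creation (a : ↥HalfInt) : Fock →ₗ[ℂ] Fock :=
  Finsupp.lift Fock ℂ Maya fun M =>
    if (a : ℚ) ∈ M.carrier then 0
    else sgn M.carrier a • Finsupp.single (M.insertCell a a.2) 1

/-- The annihilation operator `w_a` (contraction by `w_a`). -/
noncomputable def annihilation (a : ↥HalfInt) : Fock →ₗ[ℂ] Fock :=
  Finsupp.lift Fock ℂ Maya fun M =>
    if (a : ℚ) ∈ M.carrier then sgn M.carrier a • Finsupp.single (M.eraseCell a) 1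
    else 0

/-- The vector space `V`, free on basis `(v_a)_{a ∈ H}`. -/
abbrev Vsp : Type := ↥HalfInt →₀ ℂ

/-- The vector space `W`, free on basis `(w_a)_{a ∈ H}`. -/
abbrev Wsp : Type := ↥HalfInt →₀ ℂ

/-- The pairing `(v, w) = Σ_a x_a y_a` between `V` and `W`. -/
noncomputable def pairVW : Vsp →ₗ[ℂ] Wsp →ₗ[ℂ] ℂ :=
  Finsupp.lsum ℂ fun a => LinearMap.smulRight (LinearMap.id : ℂ →ₗ[ℂ] ℂ) (Finsupp.lapply a)

/-- The bilinear map `B((x,y),(x',y')) = Σ_a x_a y'_a` on `V ⊕ W`. -/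
noncomputable def bilinVW : (Vsp × Wsp) →ₗ[ℂ] (Vsp × Wsp) →ₗ[ℂ] ℂ :=
  (pairVW.comp (LinearMap.fst ℂ Vsp Wsp)).compl₂ (LinearMap.snd ℂ Vsp Wsp)

/-- The quadratic form `Q(x ⊕ y) = Σ_a x_a y_a` on `V ⊕ W`, so that in
`CliffordAlgebra Qform` the relations `v v' + v' v = 0`, `w w' + w' w = 0`,
`v w + w v = (v,w)·1` hold. -/
noncomputable def Qform : QuadraticForm ℂ (Vsp × Wsp) :=
  LinearMap.BilinMap.toQuadraticMap bilinVW

lemma Maya.ext' {M N : Maya} (h : M.carrier = N.carrier) : M = N := by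
  cases M; cases N; simpa using h

lemma Hneg_inter_Ioi_finite (a : ℚ) : (Hneg ∩ Set.Ioi a).Finite := by
  have : Hneg ∩ Set.Ioi a ⊆ (fun n : ℤ => (n : ℚ) + 1/2) '' (Set.Ioo ⌊a - 1⌋ 0) := by
    rintro q ⟨⟨⟨n, rfl⟩, hq0⟩, hqa⟩
    simp only [Set.mem_Ioi] at hqa
    refine ⟨n, ⟨?_, ?_⟩, rfl⟩
    · have h1 : (⌊a - 1⌋ : ℚ) ≤ a - 1 := Int.floor_le _
      have h2 : a - 1 < (n : ℚ) := by linarith [hqa]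
      exact_mod_cast h1.trans_lt h2
    · have : (n : ℚ) < 0 := by linarith
      exact_mod_cast this
  exact ((Set.finite_Ioo _ _).image _).subset this

lemma Maya.finite_inter_Ioi (M : Maya) (a : ℚ) : (M.carrier ∩ Set.Ioi a).Finite := by
  have hsub : M.carrier ∩ Set.Ioi a ⊆ (symmDiff M.carrier Hneg) ∪ (Hneg ∩ Set.Ioi a) := by
    intro x ⟨hx, hxa⟩
    by_cases h : x ∈ Hneg
    · exact Or.inr ⟨h, hxa⟩
    · exact Or.inl (Set.mem_symmDiff.mpr (Or.inl ⟨hx, h⟩))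
  exact (M.finite_symmDiff.union (Hneg_inter_Ioi_finite a)).subset hsub

lemma sgn_sq (S : Set ℚ) (a : ℚ) : sgn S a * sgn S a = 1 := by
  simp [sgn, ← pow_add, ← two_mul, pow_mul]

lemma sgn_insert_gt {S : Set ℚ} {a b : ℚ} (hb : b ∉ S) (hab : a < b)
    (hf : (S ∩ Set.Ioi a).Finite) : sgn (insert b S) a = - sgn S a := by
  have hset : insert b S ∩ Set.Ioi a = insert b (S ∩ Set.Ioi a) := by
    ext x
    simp only [Set.mem_inter_iff, Set.mem_insert_iff, Set.mem_Ioi]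
    constructor
    · rintro ⟨rfl | hx, hxa⟩
      · exact Or.inl rfl
      · exact Or.inr ⟨hx, hxa⟩
    · rintro (rfl | ⟨hx, hxa⟩)
      · exact ⟨Or.inl rfl, hab⟩
      · exact ⟨Or.inr hx, hxa⟩
  have hbm : b ∉ S ∩ Set.Ioi a := fun h => hb h.1
  rw [sgn, sgn, hset, Set.ncard_insert_of_notMem hbm hf, pow_succ]
  ring

lemma sgn_insert_le {S : Set ℚ} {a b : ℚ} (hab : b ≤ a) : sgn (insert b S) a = sgn S a := by
  have hset : insert b S ∩ Set.Ioi a = S ∩ Set.Ioi a := by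
    ext x
    simp only [Set.mem_inter_iff, Set.mem_insert_iff, Set.mem_Ioi]
    constructor
    · rintro ⟨rfl | hx, hxa⟩
      · exact absurd hab (not_le.mpr hxa)
      · exact ⟨hx, hxa⟩
    · rintro ⟨hx, hxa⟩; exact ⟨Or.inr hx, hxa⟩
  rw [sgn, sgn, hset]

lemma sgn_diff_gt {S : Set ℚ} {a b : ℚ} (hb : b ∈ S) (hab : a < b)
    (hf : ((S \ {b}) ∩ Set.Ioi a).Finite) : sgn (S \ {b}) a = - sgn S a := by
  have h1 : sgn (insert b (S \ {b})) a = - sgn (S \ {b}) a :=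
    sgn_insert_gt (fun h => h.2 rfl) hab hf
  rw [Set.insert_diff_singleton, Set.insert_eq_self.mpr hb] at h1
  rw [h1]; ring

lemma sgn_diff_le {S : Set ℚ} {a b : ℚ} (hab : b ≤ a) : sgn (S \ {b}) a = sgn S a := by
  have hset : (S \ {b}) ∩ Set.Ioi a = S ∩ Set.Ioi a := by
    ext x
    simp only [Set.mem_inter_iff, Set.mem_diff, Set.mem_singleton_iff, Set.mem_Ioi]
    constructor
    · rintro ⟨⟨hx, _⟩, hxa⟩; exact ⟨hx, hxa⟩
    · rintro ⟨hx, hxa⟩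
      exact ⟨⟨hx, fun h => absurd hab (not_le.mpr (h ▸ hxa))⟩, hxa⟩
  rw [sgn, sgn, hset]
lemma creation_single (a : ↥HalfInt) (M : Maya) :
    creation a (Finsupp.single M 1) =
      if (a : ℚ) ∈ M.carrier then 0
      else sgn M.carrier a • Finsupp.single (M.insertCell a a.2) 1 := by
  rw [creation, Finsupp.lift_apply, Finsupp.sum_single_index (by simp), one_smul]

lemma annihilation_single (a : ↥HalfInt) (M : Maya) :
    annihilation a (Finsupp.single M 1) =
      if (a : ℚ) ∈ M.carrier then sgn M.carrier a • Finsupp.single (M.eraseCell a) 1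
      else 0 := by
  rw [annihilation, Finsupp.lift_apply, Finsupp.sum_single_index (by simp), one_smul]

lemma creation_single_mem (a : ↥HalfInt) (M : Maya) (h : (a : ℚ) ∈ M.carrier) (c : ℂ) :
    creation a (Finsupp.single M c) = 0 := by
  rw [creation, Finsupp.lift_apply, Finsupp.sum_single_index (by simp), if_pos h, smul_zero]

lemma annihilation_single_notmem (a : ↥HalfInt) (M : Maya) (h : (a : ℚ) ∉ M.carrier) (c : ℂ) :
    annihilation a (Finsupp.single M c) = 0 := by
  rw [annihilation, Finsupp.lift_apply, Finsupp.sum_single_index (by simp), if_neg h, smul_zero]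
lemma crea_crea_lt (a b : ↥HalfInt) (hab : (a : ℚ) < (b : ℚ)) (M : Maya) :
    creation a (creation b (Finsupp.single M 1)) =
      - creation b (creation a (Finsupp.single M 1)) := by
  by_cases hb : (b : ℚ) ∈ M.carrier
  · by_cases ha : (a : ℚ) ∈ M.carrier
    · simp [creation_single, ha, hb]
    · have hbmem : (b : ℚ) ∈ (M.insertCell a a.2).carrier := Or.inr hb
      simp [creation_single, ha, hb, creation_single_mem b _ hbmem]
  · by_cases ha : (a : ℚ) ∈ M.carrier
    · have hamem : (a : ℚ) ∈ (M.insertCell b b.2).carrier := Or.inr ha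
      simp [creation_single, ha, hb, creation_single_mem a _ hamem]
    · have hane : (a : ℚ) ∉ (M.insertCell b b.2).carrier := by
        rintro (h | h)
        · exact hab.ne h
        · exact ha h
      have hbne : (b : ℚ) ∉ (M.insertCell a a.2).carrier := by
        rintro (h | h)
        · exact hab.ne' h
        · exact hb h
      rw [creation_single, creation_single, if_neg hb, if_neg ha, map_smul, map_smul,
        creation_single, creation_single, if_neg hane, if_neg hbne, smul_smul, smul_smul]
      have hMeq : (M.insertCell b b.2).insertCell a a.2 = (M.insertCell a a.2).insertCell b b.2 :=
        Maya.ext' (Set.insert_comm _ _ _)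
      have h1 : sgn (M.insertCell b b.2).carrier a = - sgn M.carrier a :=
        sgn_insert_gt hb hab (M.finite_inter_Ioi a)
      have h2 : sgn (M.insertCell a a.2).carrier b = sgn M.carrier b :=
        sgn_insert_le hab.le
      rw [hMeq, h1, h2, ← neg_smul]
      congr 1
      ring

lemma crea_crea_single (a b : ↥HalfInt) (M : Maya) :
    creation a (creation b (Finsupp.single M 1)) =
      - creation b (creation a (Finsupp.single M 1)) := by
  rcases lt_trichotomy (a : ℚ) (b : ℚ) with h | h | h
  · exact crea_crea_lt a b h M
  · have : a = b := Subtype.ext h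
    subst this
    by_cases ha : (a : ℚ) ∈ M.carrier
    · simp [creation_single, ha]
    · have h1 : (a : ℚ) ∈ (M.insertCell a a.2).carrier := Or.inl rfl
      simp [creation_single, ha, creation_single_mem a _ h1]
  · rw [crea_crea_lt b a h M, neg_neg]

lemma anni_anni_lt (a b : ↥HalfInt) (hab : (a : ℚ) < (b : ℚ)) (M : Maya) :
    annihilation a (annihilation b (Finsupp.single M 1)) =
      - annihilation b (annihilation a (Finsupp.single M 1)) := by
  by_cases hb : (b : ℚ) ∈ M.carrier
  · by_cases ha : (a : ℚ) ∈ M.carrier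
    · have hamem : (a : ℚ) ∈ (M.eraseCell b).carrier := ⟨ha, fun h => hab.ne h⟩
      have hbmem : (b : ℚ) ∈ (M.eraseCell a).carrier := ⟨hb, fun h => hab.ne' h⟩
      rw [annihilation_single, annihilation_single, if_pos hb, if_pos ha, map_smul, map_smul,
        annihilation_single, annihilation_single, if_pos hamem, if_pos hbmem,
        smul_smul, smul_smul]
      have hMeq : (M.eraseCell b).eraseCell a = (M.eraseCell a).eraseCell b :=
        Maya.ext' (Set.diff_diff_comm)
      have h1 : sgn (M.eraseCell b).carrier a = - sgn M.carrier a :=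
        sgn_diff_gt hb hab ((M.eraseCell b).finite_inter_Ioi a)
      have h2 : sgn (M.eraseCell a).carrier b = sgn M.carrier b :=
        sgn_diff_le hab.le
      rw [hMeq, h1, h2, ← neg_smul]
      congr 1
      ring
    · have hane : (a : ℚ) ∉ (M.eraseCell b).carrier := fun h => ha h.1
      simp [annihilation_single, ha, hb, annihilation_single_notmem a _ hane]
  · by_cases ha : (a : ℚ) ∈ M.carrier
    · have hbne : (b : ℚ) ∉ (M.eraseCell a).carrier := fun h => hb h.1
      simp [annihilation_single, ha, hb, annihilation_single_notmem b _ hbne]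
    · simp [annihilation_single, ha, hb]

lemma anni_anni_single (a b : ↥HalfInt) (M : Maya) :
    annihilation a (annihilation b (Finsupp.single M 1)) =
      - annihilation b (annihilation a (Finsupp.single M 1)) := by
  rcases lt_trichotomy (a : ℚ) (b : ℚ) with h | h | h
  · exact anni_anni_lt a b h M
  · have : a = b := Subtype.ext h
    subst this
    by_cases ha : (a : ℚ) ∈ M.carrier
    · have h1 : (a : ℚ) ∉ (M.eraseCell a).carrier := fun h => h.2 rfl
      simp [annihilation_single, ha, annihilation_single_notmem a _ h1]
    · simp [annihilation_single, ha]
  · rw [anni_anni_lt b a h M, neg_neg]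

lemma crea_anni_single (a b : ↥HalfInt) (M : Maya) :
    creation a (annihilation b (Finsupp.single M 1)) +
      annihilation b (creation a (Finsupp.single M 1)) =
      (if a = b then (1 : ℂ) else 0) • Finsupp.single M 1 := by
  by_cases hab : a = b
  · subst hab
    rw [if_pos rfl, one_smul]
    by_cases ha : (a : ℚ) ∈ M.carrier
    · have h1 : (a : ℚ) ∉ (M.eraseCell a).carrier := fun h => h.2 rfl
      rw [annihilation_single, creation_single, if_pos ha, if_pos ha, map_smul,
        creation_single, if_neg h1, smul_smul, map_zero, add_zero]
      have hMeq : (M.eraseCell a).insertCell a a.2 = M := by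
        apply Maya.ext'
        show insert (a : ℚ) (M.carrier \ {(a : ℚ)}) = M.carrier
        rw [Set.insert_diff_singleton, Set.insert_eq_self.mpr ha]
      have h2 : sgn (M.eraseCell a).carrier a = sgn M.carrier a := sgn_diff_le le_rfl
      rw [hMeq, h2, sgn_sq, one_smul]
    · have h1 : (a : ℚ) ∈ (M.insertCell a a.2).carrier := Or.inl rfl
      rw [annihilation_single, creation_single, if_neg ha, if_neg ha, map_smul,
        annihilation_single, if_pos h1, smul_smul, map_zero, zero_add]
      have hMeq : (M.insertCell a a.2).eraseCell a = M := by
        apply Maya.ext'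
        show insert (a : ℚ) M.carrier \ {(a : ℚ)} = M.carrier
        rw [Set.insert_diff_self_of_notMem ha]
      have h2 : sgn (M.insertCell a a.2).carrier a = sgn M.carrier a := sgn_insert_le le_rfl
      rw [hMeq, h2, sgn_sq, one_smul]
  · have habq : (a : ℚ) ≠ (b : ℚ) := fun h => hab (Subtype.ext h)
    rw [if_neg hab, zero_smul]
    by_cases hb : (b : ℚ) ∈ M.carrier
    · by_cases ha : (a : ℚ) ∈ M.carrier
      · have h1 : (a : ℚ) ∈ (M.eraseCell b).carrier := ⟨ha, habq⟩
        simp [creation_single, annihilation_single, ha, hb, creation_single_mem a _ h1]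
      · have h1 : (a : ℚ) ∉ (M.eraseCell b).carrier := fun h => ha h.1
        have h2 : (b : ℚ) ∈ (M.insertCell a a.2).carrier := Or.inr hb
        rw [annihilation_single, creation_single, if_pos hb, if_neg ha, map_smul, map_smul,
          creation_single, annihilation_single, if_neg h1, if_pos h2, smul_smul, smul_smul]
        have hMeq : (M.eraseCell b).insertCell a a.2 = (M.insertCell a a.2).eraseCell b := by
          apply Maya.ext'
          exact Set.insert_diff_singleton_comm habq _
        rw [hMeq]
        rcases lt_or_gt_of_ne habq with h | h
        · have s1 : sgn (M.eraseCell b).carrier a = - sgn M.carrier a :=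
            sgn_diff_gt hb h ((M.eraseCell b).finite_inter_Ioi a)
          have s2 : sgn (M.insertCell a a.2).carrier b = sgn M.carrier b :=
            sgn_insert_le h.le
          rw [s1, s2, ← add_smul]
          rw [show sgn M.carrier b * -sgn M.carrier a + sgn M.carrier a * sgn M.carrier b = 0
            by ring, zero_smul]
        · have s1 : sgn (M.eraseCell b).carrier a = sgn M.carrier a :=
            sgn_diff_le h.le
          have s2 : sgn (M.insertCell a a.2).carrier b = - sgn M.carrier b :=
            sgn_insert_gt ha h (M.finite_inter_Ioi b)
          rw [s1, s2, ← add_smul]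
          rw [show sgn M.carrier b * sgn M.carrier a + sgn M.carrier a * -sgn M.carrier b = 0
            by ring, zero_smul]
    · by_cases ha : (a : ℚ) ∈ M.carrier
      · simp [creation_single, annihilation_single, ha, hb]
      · have h2 : (b : ℚ) ∉ (M.insertCell a a.2).carrier := by
          rintro (h | h)
          · exact habq h.symm
          · exact hb h
        simp [creation_single, annihilation_single, ha, hb, annihilation_single_notmem b _ h2]
lemma crea_crea_op (a b : ↥HalfInt) :
    creation a * creation b + creation b * creation a = (0 : Module.End ℂ Fock) := by
  apply Finsupp.lhom_ext
  intro M c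
  rw [show (Finsupp.single M c : Fock) = c • Finsupp.single M 1 by
    simp [Finsupp.smul_single]]
  simp only [LinearMap.add_apply, Module.End.mul_apply, LinearMap.zero_apply, map_smul]
  rw [crea_crea_single a b M]
  simp

lemma anni_anni_op (a b : ↥HalfInt) :
    annihilation a * annihilation b + annihilation b * annihilation a =
      (0 : Module.End ℂ Fock) := by
  apply Finsupp.lhom_ext
  intro M c
  rw [show (Finsupp.single M c : Fock) = c • Finsupp.single M 1 by
    simp [Finsupp.smul_single]]
  simp only [LinearMap.add_apply, Module.End.mul_apply, LinearMap.zero_apply, map_smul]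
  rw [anni_anni_single a b M]
  simp

lemma crea_anni_op (a b : ↥HalfInt) :
    creation a * annihilation b + annihilation b * creation a =
      (if a = b then (1 : ℂ) else 0) • (1 : Module.End ℂ Fock) := by
  apply Finsupp.lhom_ext
  intro M c
  rw [show (Finsupp.single M c : Fock) = c • Finsupp.single M 1 by
    simp [Finsupp.smul_single]]
  simp only [LinearMap.add_apply, Module.End.mul_apply, LinearMap.smul_apply,
    Module.End.one_apply, map_smul]
  rw [crea_anni_single a b M]

noncomputable def Aop : Vsp →ₗ[ℂ] Module.End ℂ Fock :=
  Finsupp.lsum ℂ fun a => LinearMap.toSpanSingleton ℂ _ (creation a)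

noncomputable def Bop : Wsp →ₗ[ℂ] Module.End ℂ Fock :=
  Finsupp.lsum ℂ fun a => LinearMap.toSpanSingleton ℂ _ (annihilation a)

lemma Aop_single (a : ↥HalfInt) (c : ℂ) :
    Aop (Finsupp.single a c) = c • creation a := by
  simp [Aop, LinearMap.toSpanSingleton_apply]

lemma Bop_single (a : ↥HalfInt) (c : ℂ) :
    Bop (Finsupp.single a c) = c • annihilation a := by
  simp [Bop, LinearMap.toSpanSingleton_apply]

lemma pairVW_single (a b : ↥HalfInt) (c d : ℂ) :
    pairVW (Finsupp.single a c) (Finsupp.single b d) =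
      (if a = b then (1 : ℂ) else 0) * (c * d) := by
  simp only [pairVW, Finsupp.lsum_single, LinearMap.smulRight_apply, LinearMap.id_coe, id_eq,
    LinearMap.smul_apply, Finsupp.lapply_apply, Finsupp.single_apply, smul_eq_mul]
  by_cases hab : a = b <;> simp [hab, eq_comm]

lemma Aop_anti (x x' : Vsp) : Aop x * Aop x' + Aop x' * Aop x = 0 := by
  induction x using Finsupp.induction_linear with
  | zero => simp
  | add f g hf hg =>
      rw [map_add, add_mul, mul_add, add_add_add_comm, hf, hg, add_zero]
  | single a c =>
      induction x' using Finsupp.induction_linear with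
      | zero => simp
      | add f g hf hg =>
          rw [map_add, mul_add, add_mul, add_add_add_comm, hf, hg, add_zero]
      | single b d =>
          rw [Aop_single, Aop_single, smul_mul_assoc, smul_mul_assoc, mul_smul_comm,
            mul_smul_comm, smul_smul, smul_smul, mul_comm d c, ← smul_add,
            crea_crea_op a b, smul_zero]

lemma Bop_anti (y y' : Wsp) : Bop y * Bop y' + Bop y' * Bop y = 0 := by
  induction y using Finsupp.induction_linear with
  | zero => simp
  | add f g hf hg =>
      rw [map_add, add_mul, mul_add, add_add_add_comm, hf, hg, add_zero]
  | single a c =>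
      induction y' using Finsupp.induction_linear with
      | zero => simp
      | add f g hf hg =>
          rw [map_add, mul_add, add_mul, add_add_add_comm, hf, hg, add_zero]
      | single b d =>
          rw [Bop_single, Bop_single, smul_mul_assoc, smul_mul_assoc, mul_smul_comm,
            mul_smul_comm, smul_smul, smul_smul, mul_comm d c, ← smul_add,
            anni_anni_op a b, smul_zero]

lemma AB_anti (x : Vsp) (y : Wsp) :
    Aop x * Bop y + Bop y * Aop x = pairVW x y • (1 : Module.End ℂ Fock) := by
  induction x using Finsupp.induction_linear with
  | zero => simp
  | add f g hf hg =>
      rw [map_add, add_mul, mul_add, add_add_add_comm, hf, hg, map_add,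
        LinearMap.add_apply, add_smul]
  | single a c =>
      induction y using Finsupp.induction_linear with
      | zero => simp
      | add f g hf hg =>
          rw [map_add, mul_add, add_mul, add_add_add_comm, hf, hg, map_add, add_smul]
      | single b d =>
          rw [Aop_single, Bop_single, smul_mul_assoc, smul_mul_assoc, mul_smul_comm,
            mul_smul_comm, smul_smul, smul_smul, mul_comm d c, ← smul_add,
            crea_anni_op a b, pairVW_single, smul_smul]
          congr 1
          ring

noncomputable def phi : (Vsp × Wsp) →ₗ[ℂ] Module.End ℂ Fock :=
  Aop ∘ₗ LinearMap.fst ℂ Vsp Wsp + Bop ∘ₗ LinearMap.snd ℂ Vsp Wsp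

lemma phi_apply (z : Vsp × Wsp) : phi z = Aop z.1 + Bop z.2 := rfl

lemma phi_sq (z : Vsp × Wsp) :
    phi z * phi z = algebraMap ℂ (Module.End ℂ Fock) (Qform z) := by
  have half : ∀ t : Module.End ℂ Fock, t + t = 0 → t = 0 := by
    intro t ht
    have h2 : (2 : ℂ) • t = 0 := by rw [two_smul]; exact ht
    have := congrArg (fun s => (2 : ℂ)⁻¹ • s) h2
    simpa [smul_smul] using this
  have hA : Aop z.1 * Aop z.1 = 0 := half _ (Aop_anti z.1 z.1)
  have hB : Bop z.2 * Bop z.2 = 0 := half _ (Bop_anti z.2 z.2)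
  rw [phi_apply, add_mul, mul_add, mul_add, hA, hB, zero_add, add_zero, AB_anti,
    Algebra.algebraMap_eq_smul_one]
  congr 1
/-- there is a unique ℂ-algebra homomorphism
`ρ : Cl(V ⊕ W) → End_ℂ(F)` with `ρ(ι(v_a ⊕ 0)) = v_a` (creation) and
`ρ(ι(0 ⊕ w_a)) = w_a` (annihilation) for every `a ∈ H`; i.e. the Fock space of
semi-infinite forms is naturally a module over the infinite Clifford algebra. -/
theorem fock_is_clifford_module :
    ∃! ρ : CliffordAlgebra Qform →ₐ[ℂ] Module.End ℂ Fock,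
      (∀ a : ↥HalfInt,
        ρ (CliffordAlgebra.ι Qform (Finsupp.single a 1, 0)) = creation a) ∧
      (∀ a : ↥HalfInt,
        ρ (CliffordAlgebra.ι Qform (0, Finsupp.single a 1)) = annihilation a) := by
  refine ⟨CliffordAlgebra.lift Qform ⟨phi, phi_sq⟩, ⟨?_, ?_⟩, ?_⟩
  · intro a
    rw [CliffordAlgebra.lift_ι_apply, phi_apply]
    simp [Aop_single]
  · intro a
    rw [CliffordAlgebra.lift_ι_apply, phi_apply]
    simp [Bop_single]
  · rintro ρ' ⟨h1, h2⟩
    apply CliffordAlgebra.hom_ext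
    apply LinearMap.prod_ext
    · apply Finsupp.lhom_ext
      intro a c
      have key : ∀ σ : CliffordAlgebra Qform →ₐ[ℂ] Module.End ℂ Fock,
          σ (CliffordAlgebra.ι Qform ((Finsupp.single a c : Vsp), (0 : Wsp))) =
            c • σ (CliffordAlgebra.ι Qform (Finsupp.single a 1, 0)) := by
        intro σ
        rw [show ((Finsupp.single a c : Vsp), (0 : Wsp)) =
          c • ((Finsupp.single a 1 : Vsp), (0 : Wsp)) by simp [Prod.smul_mk, Finsupp.smul_single],
          map_smul, map_smul]
      simp only [LinearMap.comp_apply, LinearMap.coe_inl, AlgHom.toLinearMap_apply,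
        LinearMap.inl_apply]
      rw [key ρ', key (CliffordAlgebra.lift Qform ⟨phi, phi_sq⟩), h1 a,
        CliffordAlgebra.lift_ι_apply]
      congr 1
      rw [phi_apply]
      simp [Aop_single]
    · apply Finsupp.lhom_ext
      intro a c
      have key : ∀ σ : CliffordAlgebra Qform →ₐ[ℂ] Module.End ℂ Fock,
          σ (CliffordAlgebra.ι Qform ((0 : Vsp), (Finsupp.single a c : Wsp))) =
            c • σ (CliffordAlgebra.ι Qform (0, Finsupp.single a 1)) := by
        intro σ
        rw [show ((0 : Vsp), (Finsupp.single a c : Wsp)) =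
          c • ((0 : Vsp), (Finsupp.single a 1 : Wsp)) by simp [Prod.smul_mk, Finsupp.smul_single],
          map_smul, map_smul]
      simp only [LinearMap.comp_apply, LinearMap.coe_inr, AlgHom.toLinearMap_apply,
        LinearMap.inr_apply]
      rw [key ρ', key (CliffordAlgebra.lift Qform ⟨phi, phi_sq⟩), h2 a,
        CliffordAlgebra.lift_ι_apply]
      congr 1
      rw [phi_apply]
      simp [Bop_single]
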